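/- Let W be the Weyl group of a root datum Ψ with a finite automorphism group Γ stabilizing a base Δ, and let w ∈ W^Γ be nontrivial. Then there is a positive root β (with respect to Δ) such that w(γ·β) is negative for every γ ∈ Γ; consequently i*(w(i*β)) in the restricted lattice cannot equal i*β, where all coefficients of ι(w(i*β)) in terms of Δ are nonpositive. -/

import Mathlib

open scoped BigOperators Classical

/-- The multiplicative group structure on `AddAut M` (composition), as in the older Mathlib. -/
instance AddAut.instGroupComp {M : Type*} [Add M] : Group (AddAut M) where
  mul g h := AddEquiv.trans h g
  one := AddEquiv.refl _
  inv := AddEquiv.symm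
  mul_assoc _ _ _ := rfl
  one_mul _ := rfl
  mul_one _ := rfl
  inv_mul_cancel := AddEquiv.self_trans_symm

/-- A (not necessarily reduced) root datum `Ψ = (X*, Φ, X_*, Φ^∨)`:
dual lattices `X`, `Y` in perfect duality, a finite set of roots, and a
coroot map satisfying the usual axioms. -/
structure ZRootDatum (X Y : Type) [AddCommGroup X] [AddCommGroup Y] : Type where
  pair : X →+ Y →+ ℤ
  perfect : Function.Bijective fun x : X => pair x
  perfect' : Function.Bijective fun y : Y => pair.flip y
  roots : Finset X
  coroot : X → Y
  pair_self : ∀ β ∈ roots, pair β (coroot β) = 2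
  reflect_mem : ∀ β ∈ roots, ∀ x ∈ roots, x - pair x (coroot β) • β ∈ roots
  coreflect_mem : ∀ β ∈ roots, ∀ β' ∈ roots,
    ∃ β'' ∈ roots, coroot β' - pair β (coroot β') • coroot β = coroot β''

variable {X Y Γ : Type} [AddCommGroup X] [AddCommGroup Y] [Group Γ]

/-- The Weyl group of a root datum: the subgroup of `Aut(X)` generated by the
reflections `w_β : x ↦ x - ⟨x, β^∨⟩β` through the roots. -/
def ZRootDatum.weylGroup (Ψ : ZRootDatum X Y) : Subgroup (AddAut X) :=
  Subgroup.closure {w : AddAut X | ∃ β ∈ Ψ.roots, ∀ x, w x = x - Ψ.pair x (Ψ.coroot β) • β}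

/-- `Δ` is a base (system of simple roots) of the root datum. -/
def ZRootDatum.IsBase (Ψ : ZRootDatum X Y) (Δ : Finset X) : Prop :=
  (↑Δ : Set X) ⊆ ↑Ψ.roots ∧
  LinearIndependent ℤ (fun a : ↥(↑Δ : Set X) => (a : X)) ∧
  ∀ β ∈ Ψ.roots, ∃ c : X → ℤ,
    β = ∑ a ∈ Δ, c a • a ∧ ((∀ a ∈ Δ, 0 ≤ c a) ∨ (∀ a ∈ Δ, c a ≤ 0))

/-- A group `Γ` acting (via `ρ` on `X*` and `ρ'` on `X_*`) by automorphisms of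
the root datum `Ψ`. -/
structure RDAction (Ψ : ZRootDatum X Y) (ρ : Γ →* AddAut X) (ρ' : Γ →* AddAut Y) : Prop where
  pair_eq : ∀ γ x y, Ψ.pair (ρ γ x) (ρ' γ y) = Ψ.pair x y
  root_mem : ∀ γ, ∀ β ∈ Ψ.roots, ρ γ β ∈ Ψ.roots
  coroot_eq : ∀ γ, ∀ β ∈ Ψ.roots, Ψ.coroot (ρ γ β) = ρ' γ (Ψ.coroot β)

/-- The norm map `N : x ↦ ∑_{γ ∈ Γ} γ·x`.  For a free lattice `X`, its kernel
is exactly the kernel of the projection of `X` onto the coinvariants `X_Γ`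
modulo torsion. -/
noncomputable def normMap [Fintype Γ] (ρ : Γ →* AddAut X) : X →+ X :=
  ∑ γ : Γ, ((ρ γ : X ≃+ X) : X →+ X)

/-- The projection `i* : X* → X̄*` onto the coinvariant lattice modulo torsion. -/
noncomputable def istar [Fintype Γ] (ρ : Γ →* AddAut X) : X →+ X ⧸ (normMap ρ).ker :=
  QuotientAddGroup.mk' (normMap ρ).ker


theorem AddAut.mul_apply_comp {M : Type*} [Add M] (g h : AddAut M) (x : M) :
    (g * h) x = g (h x) := rfl

theorem AddAut.one_apply_comp {M : Type*} [Add M] (x : M) : (1 : AddAut M) x = x := rfl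

namespace ZRD

variable (Ψ : ZRootDatum X Y)

/-- The linear functional `x ↦ ⟨x, β^∨⟩`. -/
def f (β : X) : Module.Dual ℤ X := (Ψ.pair.flip (Ψ.coroot β)).toIntLinearMap

@[simp] lemma f_apply (β x : X) : f Ψ β x = Ψ.pair x (Ψ.coroot β) := rfl

lemma f_self {β : X} (h : β ∈ Ψ.roots) : f Ψ β β = 2 := Ψ.pair_self β h

/-- The reflection through a root (identity for non-roots). -/
noncomputable def s (β : X) : X ≃ₗ[ℤ] X :=
  if h : β ∈ Ψ.roots then Module.reflection (f_self Ψ h) else LinearEquiv.refl ℤ X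

lemma s_apply {β : X} (h : β ∈ Ψ.roots) (x : X) :
    s Ψ β x = x - Ψ.pair x (Ψ.coroot β) • β := by
  rw [s, dif_pos h]; exact Module.reflection_apply x (f_self Ψ h)

lemma s_root {β : X} (h : β ∈ Ψ.roots) {x : X} (hx : x ∈ Ψ.roots) :
    s Ψ β x ∈ Ψ.roots := by
  rw [s_apply Ψ h]; exact Ψ.reflect_mem β h x hx

lemma s_invol (β : X) (x : X) : s Ψ β (s Ψ β x) = x := by
  by_cases h : β ∈ Ψ.roots
  · rw [s, dif_pos h]; exact Module.involutive_reflection (f_self Ψ h) x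
  · rw [s, dif_neg h]; rfl

lemma s_symm (β : X) : (s Ψ β).symm = s Ψ β := by
  by_cases h : β ∈ Ψ.roots
  · rw [s, dif_pos h]; exact Module.reflection_symm (f_self Ψ h)
  · rw [s, dif_neg h]; rfl

lemma s_symm_apply (β x : X) : (s Ψ β).symm x = s Ψ β x := by rw [s_symm]

lemma s_self {β : X} (h : β ∈ Ψ.roots) : s Ψ β β = -β := by
  rw [s, dif_pos h]; exact Module.reflection_apply_self (f_self Ψ h)

lemma root_ne_zero {β : X} (h : β ∈ Ψ.roots) : β ≠ 0 := by
  intro e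
  have := Ψ.pair_self β h
  rw [e] at this
  simp at this

lemma neg_root {β : X} (h : β ∈ Ψ.roots) : -β ∈ Ψ.roots := by
  have := Ψ.reflect_mem β h β h
  rwa [Ψ.pair_self β h, two_smul, sub_add_eq_sub_sub, sub_self, zero_sub] at this

/-- The span of the roots. -/
def Q : Submodule ℤ X := Submodule.span ℤ (Ψ.roots : Set X)

lemma root_mem_Q {β : X} (h : β ∈ Ψ.roots) : β ∈ Q Ψ :=
  Submodule.subset_span h

lemma s_maps_Q (β : X) {x : X} (hx : x ∈ Q Ψ) : s Ψ β x ∈ Q Ψ := by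
  by_cases h : β ∈ Ψ.roots
  · rw [s_apply Ψ h]
    exact Submodule.sub_mem _ hx (Submodule.smul_mem _ _ (root_mem_Q Ψ h))
  · rw [s, dif_neg h]; exact hx

end ZRD

namespace ZRD

variable (Ψ : ZRootDatum X Y)

/-- Product of reflections along a word. -/
noncomputable def wp (L : List X) : X ≃ₗ[ℤ] X := (L.map (s Ψ)).prod

@[simp] lemma wp_nil (x : X) : wp Ψ [] x = x := rfl

lemma wp_cons (β : X) (L : List X) (x : X) : wp Ψ (β :: L) x = s Ψ β (wp Ψ L x) := by
  rw [wp, List.map_cons, List.prod_cons]; rfl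

lemma wp_append (L₁ L₂ : List X) (x : X) :
    wp Ψ (L₁ ++ L₂) x = wp Ψ L₁ (wp Ψ L₂ x) := by
  rw [wp, List.map_append, List.prod_append]; rfl

lemma wp_singleton (β : X) (x : X) : wp Ψ [β] x = s Ψ β x := by
  rw [wp_cons]; rfl

lemma wp_root {L : List X} (hL : ∀ b ∈ L, b ∈ Ψ.roots) {β : X} (hβ : β ∈ Ψ.roots) :
    wp Ψ L β ∈ Ψ.roots := by
  induction L with
  | nil => simpa using hβ
  | cons a L ih =>
    rw [wp_cons]
    exact s_root Ψ (hL a (by simp)) (ih fun b hb => hL b (by simp [hb]))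

lemma wp_maps_Q (L : List X) {x : X} (hx : x ∈ Q Ψ) : wp Ψ L x ∈ Q Ψ := by
  induction L with
  | nil => simpa using hx
  | cons a L ih => rw [wp_cons]; exact s_maps_Q Ψ a ih

lemma wp_reverse_apply (L : List X) (x : X) : wp Ψ L.reverse (wp Ψ L x) = x := by
  induction L generalizing x with
  | nil => rfl
  | cons a L ih =>
    rw [wp_cons, List.reverse_cons, wp_append, wp_singleton, s_invol, ih]

lemma wp_apply_reverse (L : List X) (x : X) : wp Ψ L (wp Ψ L.reverse x) = x := by
  have := wp_reverse_apply Ψ L.reverse x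
  rwa [List.reverse_reverse] at this

lemma wp_symm_apply (L : List X) (x : X) : (wp Ψ L).symm x = wp Ψ L.reverse x := by
  apply (wp Ψ L).injective
  rw [LinearEquiv.apply_symm_apply, wp_apply_reverse]

section Base

variable (Δ : Finset X)

/-- Positive roots. -/
def Pos (β : X) : Prop :=
  β ∈ Ψ.roots ∧ ∃ c : X → ℤ, β = ∑ a ∈ Δ, c a • a ∧ ∀ a ∈ Δ, 0 ≤ c a

variable {Ψ Δ}

lemma coeff_unique (hΔ : Ψ.IsBase Δ) {c d : X → ℤ} (h : ∑ a ∈ Δ, c a • a = ∑ a ∈ Δ, d a • a) :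
    ∀ a ∈ Δ, c a = d a := by
  have hli := hΔ.2.1
  rw [linearIndependent_iff'] at hli
  set e : {x // x ∈ Δ} ↪ ↥(↑Δ : Set X) :=
    ⟨fun a => ⟨a.1, by simpa using a.2⟩, fun a b hab => by
      apply Subtype.ext; exact congrArg Subtype.val hab⟩ with he
  have key := hli (Δ.attach.map e) (fun i => c i.1 - d i.1)
  have hsum : (∑ i ∈ Δ.attach.map e, (c i.1 - d i.1) • (i.1 : X)) = 0 := by
    rw [Finset.sum_map]
    have h2 : (∑ i ∈ Δ.attach, (c (e i).1 - d (e i).1) • ((e i).1 : X))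
        = ∑ i ∈ Δ.attach, (c i.1 - d i.1) • (i.1 : X) :=
      Finset.sum_congr rfl (fun x _ => rfl)
    rw [h2, Finset.sum_attach Δ (fun a => (c a - d a) • a)]
    simp only [sub_smul, Finset.sum_sub_distrib, h, sub_self]
  intro a ha
  have h3 := key hsum ⟨a, by simpa using ha⟩ (by
    rw [Finset.mem_map]
    exact ⟨⟨a, ha⟩, Finset.mem_attach _ _, rfl⟩)
  have h4 : c a - d a = 0 := h3
  omega

lemma pos_or_pos_neg (hΔ : Ψ.IsBase Δ) {β : X} (hβ : β ∈ Ψ.roots) : Pos Ψ Δ β ∨ Pos Ψ Δ (-β) := by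
  obtain ⟨c, hc, hsign⟩ := hΔ.2.2 β hβ
  rcases hsign with h | h
  · exact Or.inl ⟨hβ, c, hc, h⟩
  · refine Or.inr ⟨neg_root Ψ hβ, fun a => -c a, ?_, fun a ha => by
      simpa using h a ha⟩
    rw [hc]
    simp [Finset.sum_neg_distrib, neg_smul]

lemma not_pos_and_pos_neg (hΔ : Ψ.IsBase Δ) {β : X} (h1 : Pos Ψ Δ β) (h2 : Pos Ψ Δ (-β)) : False := by
  obtain ⟨hβ, c, hc, hcpos⟩ := h1
  obtain ⟨_, d, hd, hdpos⟩ := h2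
  have hβ' : β = ∑ a ∈ Δ, (-d a) • a := by
    rw [← neg_neg β, hd]
    simp [neg_smul]
  have hzero : ∀ a ∈ Δ, c a = 0 := by
    intro a ha
    have h1 := hcpos a ha
    have h2 := hdpos a ha
    have h3 := coeff_unique hΔ (hc.symm.trans hβ') a ha
    omega
  apply root_ne_zero Ψ hβ
  rw [hc]
  exact Finset.sum_eq_zero fun a ha => by rw [hzero a ha, zero_smul]

lemma not_pos_neg_of_pos (hΔ : Ψ.IsBase Δ) {β : X} (h1 : Pos Ψ Δ β) : ¬ Pos Ψ Δ (-β) :=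
  fun h2 => not_pos_and_pos_neg hΔ h1 h2

lemma simple_mem_roots (hΔ : Ψ.IsBase Δ) {a : X} (ha : a ∈ Δ) : a ∈ Ψ.roots := hΔ.1 ha

lemma simple_pos (hΔ : Ψ.IsBase Δ) {a : X} (ha : a ∈ Δ) : Pos Ψ Δ a := by
  refine ⟨simple_mem_roots hΔ ha, fun b => if b = a then 1 else 0, ?_, ?_⟩
  · have : (∑ b ∈ Δ, (if b = a then (1:ℤ) else 0) • b) = ∑ b ∈ Δ, (if b = a then b else 0) := by
      apply Finset.sum_congr rfl
      intro b _
      split <;> simp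
    rw [this, Finset.sum_ite_eq' Δ a (fun b => b), if_pos ha]
  · intro b _; dsimp only; split <;> norm_num

end Base

end ZRD

namespace ZRD

variable (Ψ : ZRootDatum X Y)

/-- The set of coroots. -/
noncomputable def Cset : Finset Y := Ψ.roots.image Ψ.coroot

lemma coroot_mem_Cset {β : X} (h : β ∈ Ψ.roots) : Ψ.coroot β ∈ Cset Ψ :=
  Finset.mem_image.mpr ⟨β, h, rfl⟩

/-- The coreflection. -/
def sY (β : X) (y : Y) : Y := y - Ψ.pair β y • Ψ.coroot β

lemma pair_s_sY {β : X} (h : β ∈ Ψ.roots) (x : X) (y : Y) :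
    Ψ.pair (s Ψ β x) y = Ψ.pair x (sY Ψ β y) := by
  rw [s_apply Ψ h, sY]
  simp only [map_sub, map_zsmul, AddMonoidHom.sub_apply, AddMonoidHom.smul_apply,
    smul_eq_mul]
  ring

lemma sY_mem_Cset {β : X} (h : β ∈ Ψ.roots) {c : Y} (hc : c ∈ Cset Ψ) :
    sY Ψ β c ∈ Cset Ψ := by
  obtain ⟨β', hβ', rfl⟩ := Finset.mem_image.mp hc
  obtain ⟨β'', hβ'', he⟩ := Ψ.coreflect_mem β h β' hβ'
  rw [sY, he]
  exact coroot_mem_Cset Ψ hβ''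

lemma sY_self {β : X} (h : β ∈ Ψ.roots) : sY Ψ β (Ψ.coroot β) = -(Ψ.coroot β) := by
  rw [sY, Ψ.pair_self β h, two_smul]
  abel

lemma sY_invol {β : X} (h : β ∈ Ψ.roots) (y : Y) : sY Ψ β (sY Ψ β y) = y := by
  have hkey : Ψ.pair β (sY Ψ β y) = - Ψ.pair β y := by
    simp only [sY, map_sub, map_zsmul, smul_eq_mul, Ψ.pair_self β h]
    ring
  rw [sY, hkey, sY, neg_smul]
  abel

/-- The averaged bilinear form on `X`. -/
noncomputable def Bf (u v : X) : ℤ := ∑ c ∈ Cset Ψ, Ψ.pair u c * Ψ.pair v c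

lemma B_inv {β : X} (h : β ∈ Ψ.roots) (u v : X) :
    Bf Ψ (s Ψ β u) (s Ψ β v) = Bf Ψ u v := by
  rw [Bf, Bf]
  apply Finset.sum_nbij' (fun c => sY Ψ β c) (fun c => sY Ψ β c)
  · intro c hc; exact sY_mem_Cset Ψ h hc
  · intro c hc; exact sY_mem_Cset Ψ h hc
  · intro c _; exact sY_invol Ψ h c
  · intro c _; exact sY_invol Ψ h c
  · intro c _
    rw [pair_s_sY Ψ h, pair_s_sY Ψ h]

lemma B_self_pos {β : X} (h : β ∈ Ψ.roots) : 0 < Bf Ψ β β := by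
  apply Finset.sum_pos' (fun c _ => mul_self_nonneg _)
  exact ⟨Ψ.coroot β, coroot_mem_Cset Ψ h, by rw [Ψ.pair_self β h]; norm_num⟩

lemma two_mul_B {β : X} (h : β ∈ Ψ.roots) (u : X) :
    2 * Bf Ψ u β = Ψ.pair u (Ψ.coroot β) * Bf Ψ β β := by
  have h1 : Bf Ψ (s Ψ β u) (s Ψ β β) = Bf Ψ u β := B_inv Ψ h u β
  rw [s_self Ψ h] at h1
  have h2 : Bf Ψ (s Ψ β u) (-β) = -Bf Ψ (s Ψ β u) β := by
    rw [Bf, Bf, ← Finset.sum_neg_distrib]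
    refine Finset.sum_congr rfl fun c _ => ?_
    simp only [map_neg, AddMonoidHom.neg_apply]
    ring
  have h3 : Bf Ψ (s Ψ β u) β
      = Bf Ψ u β - Ψ.pair u (Ψ.coroot β) * Bf Ψ β β := by
    rw [Bf, Bf, Bf, s_apply Ψ h, Finset.mul_sum, ← Finset.sum_sub_distrib]
    refine Finset.sum_congr rfl fun c _ => ?_
    simp only [map_sub, map_zsmul, AddMonoidHom.sub_apply, AddMonoidHom.smul_apply,
      smul_eq_mul]
    ring
  rw [h2, h3] at h1
  linarith

lemma B_sum₂ (u : X) (Δ : Finset X) (c : X → ℤ) :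
    Bf Ψ u (∑ a ∈ Δ, c a • a) = ∑ a ∈ Δ, c a * Bf Ψ u a := by
  have hp : ∀ cc : Y, Ψ.pair (∑ a ∈ Δ, c a • a) cc = ∑ a ∈ Δ, c a * Ψ.pair a cc := by
    intro cc
    rw [map_sum, AddMonoidHom.finset_sum_apply]
    refine Finset.sum_congr rfl fun a _ => ?_
    simp only [map_zsmul, AddMonoidHom.smul_apply, smul_eq_mul]
  rw [Bf]
  have hterm : ∀ cc ∈ Cset Ψ, Ψ.pair u cc * Ψ.pair (∑ a ∈ Δ, c a • a) cc
      = ∑ a ∈ Δ, c a * (Ψ.pair u cc * Ψ.pair a cc) := by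
    intro cc _
    rw [hp cc, Finset.mul_sum]
    exact Finset.sum_congr rfl fun a _ => by ring
  rw [Finset.sum_congr rfl hterm, Finset.sum_comm]
  exact Finset.sum_congr rfl fun a _ => by rw [Bf, Finset.mul_sum]

end ZRD

namespace ZRD

open Module

variable {Ψ : ZRootDatum X Y} {Δ : Finset X}

lemma exists_simple_pos_pair (hΔ : Ψ.IsBase Δ) {β : X} (hβ : Pos Ψ Δ β) :
    ∃ a ∈ Δ, 0 < Ψ.pair β (Ψ.coroot a) := by
  obtain ⟨hβr, c, hc, hcpos⟩ := hβ
  have hBpos : 0 < Bf Ψ β β := B_self_pos Ψ hβr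
  have hexp : Bf Ψ β β = ∑ a ∈ Δ, c a * Bf Ψ β a := by
    conv_lhs => rw [show Bf Ψ β β = Bf Ψ β (∑ a ∈ Δ, c a • a) by rw [← hc]]
    exact B_sum₂ Ψ β Δ c
  have : ∃ a ∈ Δ, 0 < c a * Bf Ψ β a := by
    by_contra hcon
    push_neg at hcon
    have : Bf Ψ β β ≤ 0 := by
      rw [hexp]
      exact Finset.sum_nonpos hcon
    omega
  obtain ⟨a, ha, hpos⟩ := this
  have haB : 0 < Bf Ψ β a := by
    rcases lt_or_ge 0 (Bf Ψ β a) with h | h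
    · exact h
    · nlinarith [hcpos a ha]
  have haroot : a ∈ Ψ.roots := simple_mem_roots hΔ ha
  have hid := two_mul_B Ψ haroot β
  have hBa : 0 < Bf Ψ a a := B_self_pos Ψ haroot
  refine ⟨a, ha, ?_⟩
  nlinarith

lemma s_simple_pos (hΔ : Ψ.IsBase Δ) {a : X} (ha : a ∈ Δ) {β : X} (hβ : Pos Ψ Δ β)
    (hnm : ∀ q : ℤ, β ≠ q • a) : Pos Ψ Δ (s Ψ a β) := by
  obtain ⟨hβr, c, hc, hcpos⟩ := hβ
  have haroot : a ∈ Ψ.roots := simple_mem_roots hΔ ha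
  obtain ⟨b, hb, hba, hcb⟩ : ∃ b ∈ Δ, b ≠ a ∧ 0 < c b := by
    by_contra hcon
    push_neg at hcon
    have hzero : ∀ b ∈ Δ, b ≠ a → c b = 0 := by
      intro b hbΔ hbne
      have := hcon b hbΔ hbne
      have := hcpos b hbΔ
      omega
    apply hnm (c a)
    rw [hc]
    exact Finset.sum_eq_single_of_mem a ha fun b hbΔ hbne => by
      rw [hzero b hbΔ hbne, zero_smul]
  set p : ℤ := Ψ.pair β (Ψ.coroot a) with hp
  set c' : X → ℤ := fun x => if x = a then c a - p else c x with hc'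
  have hrep : s Ψ a β = ∑ x ∈ Δ, c' x • x := by
    rw [s_apply Ψ haroot, ← hp]
    have hsplit : (∑ x ∈ Δ, c' x • x)
        = (∑ x ∈ Δ, c x • x) + (∑ x ∈ Δ, if x = a then (-p) • x else 0) := by
      rw [← Finset.sum_add_distrib]
      refine Finset.sum_congr rfl fun x hx => ?_
      by_cases hxa : x = a
      · subst hxa
        simp only [hc', if_pos rfl]
        rw [sub_smul, neg_smul]
        abel
      · simp only [hc', if_neg hxa, add_zero]
    rw [hsplit, Finset.sum_ite_eq' Δ a (fun x => (-p) • x), if_pos ha, ← hc, neg_smul]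
    abel
  have hsr : s Ψ a β ∈ Ψ.roots := s_root Ψ haroot hβr
  obtain ⟨d, hd, hsign⟩ := hΔ.2.2 _ hsr
  have heq : ∀ x ∈ Δ, d x = c' x := coeff_unique hΔ (hd.symm.trans hrep)
  rcases hsign with hpos | hneg
  · exact ⟨hsr, d, hd, hpos⟩
  · exfalso
    have h1 := hneg b hb
    have h2 := heq b hb
    simp only [hc', if_neg hba] at h2
    omega

variable [Module.Free ℤ X]

lemma s_eq_of_smul {β' β : X} (hβ' : β' ∈ Ψ.roots) (hβ : β ∈ Ψ.roots) (q : ℤ)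
    (hq : β' = q • β) : ∀ x ∈ Q Ψ, s Ψ β' x = s Ψ β x := by
  have hβ0 : β ≠ 0 := root_ne_zero Ψ hβ
  have hfin : (Ψ.roots : Set X).Finite := Ψ.roots.finite_toSet
  have hspan : β ∈ Submodule.span ℤ (Ψ.roots : Set X) := Submodule.subset_span hβ
  set f : Dual ℤ X := ZRD.f Ψ β with hf
  set g : Dual ℤ X := q • ZRD.f Ψ β' with hg
  have hf1 : f β = 2 := f_self Ψ hβ
  have hg1 : g β = 2 := by
    have h0 : Ψ.pair β' (Ψ.coroot β') = 2 := Ψ.pair_self β' hβ'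
    nth_rewrite 1 [hq] at h0
    rw [map_zsmul] at h0
    simpa [hg, smul_eq_mul] using h0
  have hfmaps : Set.MapsTo (preReflection β f) (Ψ.roots : Set X) (Ψ.roots : Set X) := by
    intro x hx
    have : preReflection β f x = s Ψ β x := by
      rw [preReflection_apply, s_apply Ψ hβ]; rfl
    rw [this]
    exact s_root Ψ hβ hx
  have hkey : ∀ x : X, preReflection β g x = s Ψ β' x := by
    intro x
    rw [preReflection_apply, s_apply Ψ hβ']
    have hv : Ψ.pair x (Ψ.coroot β') • β' = g x • β := by
      set P := Ψ.pair x (Ψ.coroot β') with hP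
      rw [hq, smul_smul, hg]
      simp only [LinearMap.smul_apply, smul_eq_mul, f_apply, ← hP]
      rw [mul_comm]
    rw [hv]
  have hgmaps : Set.MapsTo (preReflection β g) (Ψ.roots : Set X) (Ψ.roots : Set X) := by
    intro x hx
    rw [hkey]
    exact s_root Ψ hβ' hx
  have := Dual.eq_of_preReflection_mapsTo' hfin hspan hf1 hfmaps hg1 hgmaps
  intro x hx
  have hfg : f x = g x := by
    have h2 := DFunLike.congr_fun this (⟨x, hx⟩ : Submodule.span ℤ (Ψ.roots : Set X))
    exact h2
  have : s Ψ β x = preReflection β g x := by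
    rw [preReflection_apply, s_apply Ψ hβ, ← hfg]; rfl
  rw [this, hkey]

lemma s_conj (u : X ≃ₗ[ℤ] X) (hu : ∀ b ∈ Ψ.roots, u b ∈ Ψ.roots)
    (hu' : ∀ b ∈ Ψ.roots, u.symm b ∈ Ψ.roots) {β : X} (hβ : β ∈ Ψ.roots) :
    ∀ x ∈ Q Ψ, s Ψ (u β) x = u (s Ψ β (u.symm x)) := by
  have huβ : u β ∈ Ψ.roots := hu β hβ
  have hβ0 : u β ≠ 0 := root_ne_zero Ψ huβ
  have hfin : (Ψ.roots : Set X).Finite := Ψ.roots.finite_toSet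
  have hspan : u β ∈ Submodule.span ℤ (Ψ.roots : Set X) := Submodule.subset_span huβ
  set f : Dual ℤ X := ZRD.f Ψ (u β) with hf
  set g : Dual ℤ X := (ZRD.f Ψ β).comp (u.symm : X →ₗ[ℤ] X) with hg
  have hf1 : f (u β) = 2 := f_self Ψ huβ
  have hg1 : g (u β) = 2 := by
    rw [hg]
    simp only [LinearMap.comp_apply, LinearEquiv.coe_coe, LinearEquiv.symm_apply_apply]
    exact f_self Ψ hβ
  have hfmaps : Set.MapsTo (preReflection (u β) f) (Ψ.roots : Set X) (Ψ.roots : Set X) := by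
    intro x hx
    have : preReflection (u β) f x = s Ψ (u β) x := by
      rw [preReflection_apply, s_apply Ψ huβ]; rfl
    rw [this]
    exact s_root Ψ huβ hx
  have hkey : ∀ x : X, preReflection (u β) g x = u (s Ψ β (u.symm x)) := by
    intro x
    rw [preReflection_apply, s_apply Ψ hβ, map_sub, map_smul,
      LinearEquiv.apply_symm_apply]
    rfl
  have hgmaps : Set.MapsTo (preReflection (u β) g) (Ψ.roots : Set X) (Ψ.roots : Set X) := by
    intro x hx
    rw [hkey]
    exact hu _ (s_root Ψ hβ (hu' x hx))
  have := Dual.eq_of_preReflection_mapsTo' hfin hspan hf1 hfmaps hg1 hgmaps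
  intro x hx
  have hfg : f x = g x := DFunLike.congr_fun this (⟨x, hx⟩ : Submodule.span ℤ (Ψ.roots : Set X))
  have h1 : s Ψ (u β) x = preReflection (u β) f x := by
    rw [preReflection_apply, s_apply Ψ huβ]; rfl
  rw [h1, preReflection_apply, hfg, ← preReflection_apply (u β) g, hkey]

end ZRD

namespace ZRD

open Module

variable {Ψ : ZRootDatum X Y} {Δ : Finset X}

/-- Refined version of `s_simple_pos` tracking the height. -/
lemma s_simple_pos' (hΔ : Ψ.IsBase Δ) {a : X} (ha : a ∈ Δ) {β : X} (hβr : β ∈ Ψ.roots)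
    {c : X → ℤ} (hc : β = ∑ x ∈ Δ, c x • x) (hcpos : ∀ x ∈ Δ, 0 ≤ c x)
    (hnm : ∀ q : ℤ, β ≠ q • a) :
    ∃ d : X → ℤ, s Ψ a β = ∑ x ∈ Δ, d x • x ∧ (∀ x ∈ Δ, 0 ≤ d x) ∧
      ∑ x ∈ Δ, d x = (∑ x ∈ Δ, c x) - Ψ.pair β (Ψ.coroot a) := by
  have haroot : a ∈ Ψ.roots := simple_mem_roots hΔ ha
  set p : ℤ := Ψ.pair β (Ψ.coroot a) with hp
  set c' : X → ℤ := fun x => if x = a then c a - p else c x with hc'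
  have hrep : s Ψ a β = ∑ x ∈ Δ, c' x • x := by
    rw [s_apply Ψ haroot, ← hp]
    have hsplit : (∑ x ∈ Δ, c' x • x)
        = (∑ x ∈ Δ, c x • x) + (∑ x ∈ Δ, if x = a then (-p) • x else 0) := by
      rw [← Finset.sum_add_distrib]
      refine Finset.sum_congr rfl fun x hx => ?_
      by_cases hxa : x = a
      · subst hxa
        simp only [hc', if_pos rfl]
        rw [sub_smul, neg_smul]
        abel
      · simp only [hc', if_neg hxa, add_zero]
    rw [hsplit, Finset.sum_ite_eq' Δ a (fun x => (-p) • x), if_pos ha, ← hc, neg_smul]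
    abel
  have hspos : Pos Ψ Δ (s Ψ a β) := s_simple_pos hΔ ha ⟨hβr, c, hc, hcpos⟩ hnm
  obtain ⟨_, d, hd, hdpos⟩ := hspos
  have heq : ∀ x ∈ Δ, d x = c' x := coeff_unique hΔ (hd.symm.trans hrep)
  refine ⟨d, hd, hdpos, ?_⟩
  have hsum : ∑ x ∈ Δ, d x = ∑ x ∈ Δ, c' x := Finset.sum_congr rfl heq
  rw [hsum]
  have : (∑ x ∈ Δ, c' x) = (∑ x ∈ Δ, c x) + (∑ x ∈ Δ, if x = a then -p else 0) := by
    rw [← Finset.sum_add_distrib]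
    refine Finset.sum_congr rfl fun x hx => ?_
    by_cases hxa : x = a
    · subst hxa
      simp only [hc', if_pos rfl]
      rw [if_pos trivial]
      ring
    · simp [hc', hxa]
  rw [this, Finset.sum_ite_eq' Δ a (fun _ => -p), if_pos ha]
  ring

variable [Module.Free ℤ X]

lemma exists_simple_word_pos (hΔ : Ψ.IsBase Δ) :
    ∀ n : ℕ, ∀ β : X, β ∈ Ψ.roots → ∀ c : X → ℤ, β = ∑ x ∈ Δ, c x • x →
      (∀ x ∈ Δ, 0 ≤ c x) → (∑ x ∈ Δ, c x) ≤ (n : ℤ) →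
      ∃ L : List X, (∀ b ∈ L, b ∈ Δ) ∧ ∀ x ∈ Q Ψ, s Ψ β x = wp Ψ L x := by
  intro n
  induction n with
  | zero =>
    intro β hβr c hc hcpos hsum
    exfalso
    have : ∀ x ∈ Δ, c x = 0 := by
      rw [← Finset.sum_eq_zero_iff_of_nonneg hcpos]
      have := Finset.sum_nonneg hcpos
      omega
    apply root_ne_zero Ψ hβr
    rw [hc]
    exact Finset.sum_eq_zero fun x hx => by rw [this x hx, zero_smul]
  | succ n ih =>
    intro β hβr c hc hcpos hsum
    obtain ⟨a, ha, hpa⟩ := exists_simple_pos_pair hΔ ⟨hβr, c, hc, hcpos⟩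
    have haroot : a ∈ Ψ.roots := simple_mem_roots hΔ ha
    by_cases hmul : ∃ q : ℤ, β = q • a
    · obtain ⟨q, hq⟩ := hmul
      exact ⟨[a], fun b hb => by rw [List.mem_singleton.mp hb]; exact ha, fun x hx => by
        rw [wp_singleton]
        exact s_eq_of_smul hβr haroot q hq x hx⟩
    · push_neg at hmul
      obtain ⟨d, hd, hdpos, hdsum⟩ := s_simple_pos' hΔ ha hβr hc hcpos hmul
      set β₂ := s Ψ a β with hβ₂
      have hβ₂r : β₂ ∈ Ψ.roots := s_root Ψ haroot hβr
      have hsum₂ : (∑ x ∈ Δ, d x) ≤ (n : ℤ) := by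
        rw [hdsum]
        omega
      obtain ⟨L₂, hL₂Δ, hL₂⟩ := ih β₂ hβ₂r d hd hdpos hsum₂
      refine ⟨[a] ++ L₂ ++ [a], ?_, ?_⟩
      · intro b hb
        simp only [List.mem_append, List.mem_singleton] at hb
        rcases hb with (hb | hb) | hb
        · simpa [hb] using ha
        · exact hL₂Δ b hb
        · simpa [hb] using ha
      · intro x hx
        have hβeq : β = s Ψ a β₂ := by rw [hβ₂, s_invol]
        have hmaps : ∀ b ∈ Ψ.roots, s Ψ a b ∈ Ψ.roots := fun b hb => s_root Ψ haroot hb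
        have hmaps' : ∀ b ∈ Ψ.roots, (s Ψ a).symm b ∈ Ψ.roots := fun b hb => by
          rw [s_symm_apply]; exact s_root Ψ haroot hb
        have hconj := s_conj (s Ψ a) hmaps hmaps' hβ₂r x hx
        rw [← hβeq] at hconj
        rw [hconj, s_symm_apply]
        have hsx : s Ψ a x ∈ Q Ψ := s_maps_Q Ψ a hx
        rw [hL₂ _ hsx]
        rw [wp_append, wp_append, wp_singleton, wp_singleton]

lemma exists_simple_word (hΔ : Ψ.IsBase Δ) {β : X} (hβr : β ∈ Ψ.roots) :
    ∃ L : List X, (∀ b ∈ L, b ∈ Δ) ∧ ∀ x ∈ Q Ψ, s Ψ β x = wp Ψ L x := by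
  have main : ∀ β' : X, Pos Ψ Δ β' →
      ∃ L : List X, (∀ b ∈ L, b ∈ Δ) ∧ ∀ x ∈ Q Ψ, s Ψ β' x = wp Ψ L x := by
    intro β' ⟨hβ'r, c, hc, hcpos⟩
    have hnn : (0:ℤ) ≤ ∑ x ∈ Δ, c x := Finset.sum_nonneg hcpos
    exact exists_simple_word_pos hΔ (∑ x ∈ Δ, c x).toNat β' hβ'r c hc hcpos (by omega)
  rcases pos_or_pos_neg hΔ hβr with hpos | hpos
  · exact main β hpos
  · obtain ⟨L, hLΔ, hL⟩ := main (-β) hpos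
    refine ⟨L, hLΔ, fun x hx => ?_⟩
    rw [← hL x hx]
    exact s_eq_of_smul hβr (neg_root Ψ hβr) (-1) (by simp) x hx

lemma word_to_simple (hΔ : Ψ.IsBase Δ) :
    ∀ L : List X, (∀ b ∈ L, b ∈ Ψ.roots) →
      ∃ L' : List X, (∀ b ∈ L', b ∈ Δ) ∧ ∀ x ∈ Q Ψ, wp Ψ L x = wp Ψ L' x := by
  intro L
  induction L with
  | nil => exact fun _ => ⟨[], by simp, fun x _ => rfl⟩
  | cons β L ih =>
    intro hL
    obtain ⟨L₁, hL₁Δ, hL₁⟩ := ih fun b hb => hL b (by simp [hb])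
    obtain ⟨Lβ, hLβΔ, hLβ⟩ := exists_simple_word hΔ (hL β (by simp))
    refine ⟨Lβ ++ L₁, fun b hb => ?_, fun x hx => ?_⟩
    · rcases List.mem_append.mp hb with h | h
      · exact hLβΔ b h
      · exact hL₁Δ b h
    · rw [wp_cons, hL₁ x hx, wp_append]
      exact hLβ _ (wp_maps_Q Ψ L₁ hx)

end ZRD

namespace ZRD

open Module

variable {Ψ : ZRootDatum X Y} {Δ : Finset X} [Module.Free ℤ X]

lemma deletion (hΔ : Ψ.IsBase Δ) (K : List X) (hK : ∀ b ∈ K, b ∈ Δ) {a : X} (ha : a ∈ Δ)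
    (hwa : Pos Ψ Δ (wp Ψ (K ++ [a]) a)) :
    ∃ L' : List X, (∀ b ∈ L', b ∈ Δ) ∧ L'.length + 1 = K.length ∧
      ∀ x ∈ Q Ψ, wp Ψ L' x = wp Ψ (K ++ [a]) x := by
  have haroot : a ∈ Ψ.roots := simple_mem_roots hΔ ha
  have hKroots : ∀ b ∈ K, b ∈ Ψ.roots := fun b hb => simple_mem_roots hΔ (hK b hb)
  set γ : ℕ → X := fun j => wp Ψ (K.drop j) a with hγ
  have hγroot : ∀ j, γ j ∈ Ψ.roots := fun j =>
    wp_root Ψ (fun b hb => hKroots b (List.drop_subset j K hb)) haroot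
  have hγlast : γ K.length = a := by
    rw [hγ]; simp only [List.drop_length]; rfl
  have hγ0 : ¬ Pos Ψ Δ (γ 0) := by
    have he : wp Ψ (K ++ [a]) a = -(γ 0) := by
      rw [wp_append, wp_singleton, s_self Ψ haroot, map_neg]
      rfl
    rw [he] at hwa
    intro hpos
    exact not_pos_and_pos_neg hΔ hpos hwa
  have hex : ∃ j, Pos Ψ Δ (γ j) := ⟨K.length, by rw [hγlast]; exact simple_pos hΔ ha⟩
  set i₀ := Nat.find hex with hi₀
  have hi₀pos : Pos Ψ Δ (γ i₀) := Nat.find_spec hex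
  have hi₀ne : i₀ ≠ 0 := fun h => hγ0 (h ▸ hi₀pos)
  have hi₀le : i₀ ≤ K.length := Nat.find_le (by rw [hγlast]; exact simple_pos hΔ ha)
  set i := i₀ - 1 with hi
  have hii : i + 1 = i₀ := by omega
  have hilt : i < K.length := by omega
  have hinot : ¬ Pos Ψ Δ (γ i) := Nat.find_min hex (by omega)
  set b := K[i] with hb
  have hbΔ : b ∈ Δ := hK b (List.getElem_mem hilt)
  have hbroot : b ∈ Ψ.roots := simple_mem_roots hΔ hbΔ
  have hdrop : K.drop i = b :: K.drop (i + 1) := List.drop_eq_getElem_cons hilt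
  have hstep : γ i = s Ψ b (γ (i + 1)) := by
    rw [hγ]
    simp only [hdrop]
    rw [wp_cons]
  -- γ (i+1) is a positive multiple of b
  obtain ⟨q, hq⟩ : ∃ q : ℤ, γ (i + 1) = q • b := by
    by_contra hcon
    push_neg at hcon
    apply hinot
    rw [hstep]
    exact s_simple_pos hΔ hbΔ (by rw [hii]; exact hi₀pos) hcon
  have hγi1root : γ (i + 1) ∈ Ψ.roots := hγroot (i + 1)
  have hline : ∀ x ∈ Q Ψ, s Ψ (γ (i + 1)) x = s Ψ b x :=
    s_eq_of_smul hγi1root hbroot q hq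
  set U := wp Ψ (K.drop (i + 1)) with hU
  have hUroots : ∀ c ∈ Ψ.roots, U c ∈ Ψ.roots := fun c hc =>
    wp_root Ψ (fun b' hb' => hKroots b' (List.drop_subset _ K hb')) hc
  have hUroots' : ∀ c ∈ Ψ.roots, U.symm c ∈ Ψ.roots := fun c hc => by
    rw [wp_symm_apply]
    exact wp_root Ψ (fun b' hb' => by
      rw [List.mem_reverse] at hb'
      exact hKroots b' (List.drop_subset _ K hb')) hc
  have hconj := s_conj U hUroots hUroots' haroot
  have hUa : U a = γ (i + 1) := rfl
  refine ⟨K.take i ++ K.drop (i + 1), ?_, ?_, ?_⟩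
  · intro c hc
    rcases List.mem_append.mp hc with h | h
    · exact hK c (List.take_subset i K h)
    · exact hK c (List.drop_subset _ K h)
  · simp only [List.length_append, List.length_take, List.length_drop]
    omega
  · intro x hx
    have hy : s Ψ a x ∈ Q Ψ := s_maps_Q Ψ a hx
    have hUy : U (s Ψ a x) ∈ Q Ψ := wp_maps_Q Ψ _ hy
    have h1 : wp Ψ (K ++ [a]) x = wp Ψ K (s Ψ a x) := by
      rw [wp_append, wp_singleton]
    have hKsplit : K = K.take i ++ (b :: K.drop (i + 1)) := by
      rw [← hdrop, List.take_append_drop]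
    have h2 : wp Ψ K (s Ψ a x) = wp Ψ (K.take i) (s Ψ b (U (s Ψ a x))) := by
      conv_lhs => rw [hKsplit]
      rw [wp_append, wp_cons]
    have h3 : s Ψ b (U (s Ψ a x)) = U x := by
      rw [← hline _ hUy]
      rw [hUa] at hconj
      rw [hconj _ hUy, LinearEquiv.symm_apply_apply, s_invol]
    rw [h1, h2, h3, wp_append]
  
lemma chamber (hΔ : Ψ.IsBase Δ) :
    ∀ n : ℕ, ∀ L : List X, L.length ≤ n → (∀ b ∈ L, b ∈ Δ) →
      (∀ β, Pos Ψ Δ β → Pos Ψ Δ (wp Ψ L β)) → ∀ x ∈ Q Ψ, wp Ψ L x = x := by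
  intro n
  induction n with
  | zero =>
    intro L hlen _ _ x _
    have : L = [] := List.eq_nil_of_length_eq_zero (by omega)
    rw [this]; rfl
  | succ n ih =>
    intro L hlen hLΔ hLpos x hx
    rcases List.eq_nil_or_concat L with rfl | ⟨K, a, rfl⟩
    · rfl
    rw [List.concat_eq_append] at *
    have hK : ∀ b ∈ K, b ∈ Δ := fun b hb => hLΔ b (by simp [hb])
    have ha : a ∈ Δ := hLΔ a (by simp)
    have hwa : Pos Ψ Δ (wp Ψ (K ++ [a]) a) := hLpos a (simple_pos hΔ ha)
    obtain ⟨L', hL'Δ, hL'len, hL'⟩ := deletion hΔ K hK ha hwa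
    have hL'pos : ∀ β, Pos Ψ Δ β → Pos Ψ Δ (wp Ψ L' β) := by
      intro β hβ
      rw [hL' β (root_mem_Q Ψ hβ.1)]
      exact hLpos β hβ
    have hlen' : L'.length ≤ n := by
      simp only [List.length_append, List.length_singleton] at hlen
      omega
    rw [← hL' x hx]
    exact ih L' hlen' hL'Δ hL'pos x hx

end ZRD

namespace ZRD

open Module

variable (Ψ : ZRootDatum X Y)

/-- `Y` is linearly equivalent to the dual of `X`. -/
noncomputable def eY : Y ≃ₗ[ℤ] Module.Dual ℤ X :=
  (AddEquiv.ofBijective Ψ.pair.flip Ψ.perfect').toIntLinearEquiv.trans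
    (addMonoidHomLequivInt ℤ)

lemma Y_free (Ψ' : ZRootDatum X Y) [Module.Free ℤ X] [Module.Finite ℤ X] :
    Module.Free ℤ Y :=
  Module.Free.of_equiv (eY Ψ').symm

lemma Y_finite (Ψ' : ZRootDatum X Y) [Module.Free ℤ X] [Module.Finite ℤ X] :
    Module.Finite ℤ Y :=
  Module.Finite.equiv (eY Ψ').symm

/-- The dual functional `y ↦ ⟨β, y⟩`. -/
def fY (β : X) : Module.Dual ℤ Y := (Ψ.pair β).toIntLinearMap

/-- The coreflection as a linear equivalence (identity for non-roots). -/
noncomputable def sYe (β : X) : Y ≃ₗ[ℤ] Y :=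
  if h : β ∈ Ψ.roots then
    Module.reflection (show fY Ψ β (Ψ.coroot β) = 2 from Ψ.pair_self β h)
  else LinearEquiv.refl ℤ Y

lemma sYe_apply {β : X} (h : β ∈ Ψ.roots) (y : Y) : sYe Ψ β y = sY Ψ β y := by
  rw [sYe, dif_pos h]
  exact Module.reflection_apply y _

lemma sYe_invol (β : X) (y : Y) : sYe Ψ β (sYe Ψ β y) = y := by
  by_cases h : β ∈ Ψ.roots
  · rw [sYe, dif_pos h]; exact Module.involutive_reflection _ y
  · rw [sYe, dif_neg h]; rfl

/-- The span of the coroots. -/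
noncomputable def M' : Submodule ℤ Y := Submodule.span ℤ (Cset Ψ : Set Y)

lemma sYe_maps_M' (β : X) {y : Y} (hy : y ∈ M' Ψ) : sYe Ψ β y ∈ M' Ψ := by
  by_cases h : β ∈ Ψ.roots
  · refine Submodule.span_induction (p := fun z _ => sYe Ψ β z ∈ M' Ψ) ?_ ?_ ?_ ?_ hy
    · intro c hc
      rw [sYe_apply Ψ h]
      exact Submodule.subset_span (sY_mem_Cset Ψ h hc)
    · show sYe Ψ β 0 ∈ M' Ψ
      rw [map_zero]; exact Submodule.zero_mem _
    · intro u v _ _ hu hv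
      show sYe Ψ β (u + v) ∈ M' Ψ
      rw [map_add]; exact Submodule.add_mem _ hu hv
    · intro k u _ hu
      show sYe Ψ β (k • u) ∈ M' Ψ
      rw [map_smul]; exact Submodule.smul_mem _ _ hu
  · rw [sYe, dif_neg h]; exact hy

lemma sYe_map_M'_eq (β : X) : Submodule.map (sYe Ψ β : Y →ₗ[ℤ] Y) (M' Ψ) = M' Ψ := by
  apply le_antisymm
  · rintro y ⟨z, hz, rfl⟩
    exact sYe_maps_M' Ψ β hz
  · intro y hy
    exact ⟨sYe Ψ β y, sYe_maps_M' Ψ β hy, sYe_invol Ψ β y⟩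

/-- The coreflection restricted to the span of the coroots. -/
noncomputable def σr (β : X) : (M' Ψ) ≃ₗ[ℤ] (M' Ψ) :=
  LinearEquiv.ofSubmodules (sYe Ψ β) (M' Ψ) (M' Ψ) (sYe_map_M'_eq Ψ β)

lemma σr_coe (β : X) (y : M' Ψ) : (σr Ψ β y : Y) = sYe Ψ β (y : Y) := rfl

/-- The finite group generated by the restricted coreflections. -/
noncomputable def Gr : Subgroup ((M' Ψ) ≃ₗ[ℤ] (M' Ψ)) :=
  Subgroup.closure {g | ∃ β ∈ Ψ.roots, g = σr Ψ β}

/-- The coroots inside the span. -/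
def CC : Set (M' Ψ) := {y : M' Ψ | (y : Y) ∈ Cset Ψ}

lemma σr_invol (β : X) (y : M' Ψ) : σr Ψ β (σr Ψ β y) = y := by
  apply Subtype.ext
  rw [σr_coe, σr_coe, sYe_invol]

lemma σr_mul_self (β : X) : σr Ψ β * σr Ψ β = 1 := by
  apply DFunLike.ext
  intro y
  exact σr_invol Ψ β y

lemma σr_inv (β : X) : (σr Ψ β)⁻¹ = σr Ψ β :=
  inv_eq_of_mul_eq_one_right (σr_mul_self Ψ β)

lemma Gr_maps_CC : ∀ g ∈ Gr Ψ, ∀ y ∈ CC Ψ, g y ∈ CC Ψ := by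
  have main : ∀ g ∈ Gr Ψ,
      (∀ y ∈ CC Ψ, g y ∈ CC Ψ) ∧ (∀ y ∈ CC Ψ, g⁻¹ y ∈ CC Ψ) := by
    intro g hg
    induction hg using Subgroup.closure_induction with
    | mem g hgen =>
      obtain ⟨β, hβ, rfl⟩ := hgen
      constructor
      · intro y hy
        show (↑(σr Ψ β y) : Y) ∈ Cset Ψ
        rw [σr_coe, sYe_apply Ψ hβ]
        exact sY_mem_Cset Ψ hβ hy
      · intro y hy
        rw [σr_inv]
        show (↑(σr Ψ β y) : Y) ∈ Cset Ψ
        rw [σr_coe, sYe_apply Ψ hβ]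
        exact sY_mem_Cset Ψ hβ hy
    | one => exact ⟨fun y hy => hy, fun y hy => by simpa using hy⟩
    | mul u v hu hv ihu ihv =>
      refine ⟨fun y hy => ihu.1 _ (ihv.1 y hy), fun y hy => ?_⟩
      rw [mul_inv_rev]
      exact ihv.2 _ (ihu.2 y hy)
    | inv u hu ihu => exact ⟨ihu.2, by simpa using ihu.1⟩
  exact fun g hg => (main g hg).1

lemma CC_finite : (CC Ψ).Finite := by
  have : CC Ψ = (Subtype.val : M' Ψ → Y) ⁻¹' ((Cset Ψ : Finset Y) : Set Y) := rfl
  rw [this]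
  exact Set.Finite.preimage (Set.injOn_of_injective Subtype.val_injective)
    (Ψ.roots.image Ψ.coroot).finite_toSet

lemma span_CC : Submodule.span ℤ (CC Ψ) = ⊤ := Submodule.span_setOf_mem_eq_top

lemma Gr_finite : (Gr Ψ : Set ((M' Ψ) ≃ₗ[ℤ] (M' Ψ))).Finite := by
  have hCC := CC_finite Ψ
  have : Finite (CC Ψ) := hCC
  have hinj : Function.Injective
      (fun g : Gr Ψ => fun y : CC Ψ => (⟨g.1 y.1, Gr_maps_CC Ψ g.1 g.2 y.1 y.2⟩ : CC Ψ)) := by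
    intro u v huv
    have : ∀ y : M' Ψ, u.1 y = v.1 y := by
      intro y
      have hspan : y ∈ Submodule.span ℤ (CC Ψ) := by rw [span_CC]; trivial
      refine Submodule.span_induction (p := fun z _ => u.1 z = v.1 z) ?_ ?_ ?_ ?_ hspan
      · intro z hz
        have h3 := congrFun huv ⟨z, hz⟩
        exact congrArg Subtype.val h3
      · show u.1 0 = v.1 0
        rw [map_zero, map_zero]
      · intro a b _ _ ha hb
        show u.1 (a + b) = v.1 (a + b)
        rw [map_add, map_add, ha, hb]
      · intro k a _ ha
        show u.1 (k • a) = v.1 (k • a)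
        rw [map_smul, map_smul, ha]
    apply Subtype.ext
    apply DFunLike.ext
    intro y
    exact this y
  have : Finite (Gr Ψ) := Finite.of_injective _ hinj
  exact Set.toFinite _

end ZRD

namespace ZRD

open Module

variable (Ψ : ZRootDatum X Y)

section EForm

variable {ι : Type} [Fintype ι]

/-- An auxiliary positive definite form on `Y` coming from a basis. -/
noncomputable def E0 (b : Basis ι ℤ Y) (y z : Y) : ℤ := ∑ i, b.repr y i * b.repr z i

lemma E0_pos (b : Basis ι ℤ Y) {y : Y} (hy : y ≠ 0) : 0 < E0 b y y := by
  obtain ⟨i, hi⟩ : ∃ i, b.repr y i ≠ 0 := by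
    by_contra hcon
    push_neg at hcon
    apply hy
    have h0 : b.repr y = 0 := Finsupp.ext hcon
    have := congrArg b.repr.symm h0
    simpa using this
  exact Finset.sum_pos' (fun j _ => mul_self_nonneg _)
    ⟨i, Finset.mem_univ i, mul_self_pos.mpr hi⟩

lemma E0_nonneg (b : Basis ι ℤ Y) (y : Y) : 0 ≤ E0 b y y :=
  Finset.sum_nonneg fun j _ => mul_self_nonneg _

lemma E0_neg₂ (b : Basis ι ℤ Y) (y z : Y) : E0 b y (-z) = -E0 b y z := by
  rw [E0, E0, ← Finset.sum_neg_distrib]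
  refine Finset.sum_congr rfl fun i _ => ?_
  rw [map_neg, Finsupp.neg_apply]
  ring

lemma E0_zero₂ (b : Basis ι ℤ Y) (y : Y) : E0 b y 0 = 0 := by
  rw [E0]
  refine Finset.sum_eq_zero fun i _ => ?_
  rw [map_zero, Finsupp.coe_zero, Pi.zero_apply, mul_zero]

lemma E0_add₂ (b : Basis ι ℤ Y) (y z₁ z₂ : Y) :
    E0 b y (z₁ + z₂) = E0 b y z₁ + E0 b y z₂ := by
  rw [E0, E0, E0, ← Finset.sum_add_distrib]
  refine Finset.sum_congr rfl fun i _ => ?_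
  rw [map_add, Finsupp.add_apply]
  ring

lemma E0_smul₂ (b : Basis ι ℤ Y) (k : ℤ) (y z : Y) :
    E0 b y (k • z) = k * E0 b y z := by
  rw [E0, E0, Finset.mul_sum]
  refine Finset.sum_congr rfl fun i _ => ?_
  rw [map_smul, Finsupp.smul_apply, smul_eq_mul]
  ring

/-- The averaged form on the coroot span. -/
noncomputable def EF [Fintype ↥(Gr Ψ)] (b : Basis ι ℤ Y) (y z : M' Ψ) : ℤ :=
  ∑ g : ↥(Gr Ψ), E0 b (g.1 y : Y) (g.1 z : Y)

lemma EF_inv [Fintype ↥(Gr Ψ)] (b : Basis ι ℤ Y) {τ : (M' Ψ) ≃ₗ[ℤ] (M' Ψ)}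
    (hτ : τ ∈ Gr Ψ) (y z : M' Ψ) : EF Ψ b (τ y) (τ z) = EF Ψ b y z := by
  rw [EF, EF]
  refine Fintype.sum_equiv
    ⟨fun g => ⟨g.1 * τ, mul_mem g.2 hτ⟩, fun g => ⟨g.1 * τ⁻¹, mul_mem g.2 (inv_mem hτ)⟩,
      fun g => Subtype.ext (by simp [mul_assoc]), fun g => Subtype.ext (by simp [mul_assoc])⟩
    (fun g => E0 b (g.1 (τ y) : Y) (g.1 (τ z) : Y)) (fun g => E0 b (g.1 y : Y) (g.1 z : Y))
    (fun g => rfl)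

lemma EF_neg₂ [Fintype ↥(Gr Ψ)] (b : Basis ι ℤ Y) (y z : M' Ψ) :
    EF Ψ b y (-z) = -EF Ψ b y z := by
  rw [EF, EF, ← Finset.sum_neg_distrib]
  refine Finset.sum_congr rfl fun g _ => ?_
  rw [map_neg]
  push_cast
  rw [E0_neg₂]

lemma EF_zero₂ [Fintype ↥(Gr Ψ)] (b : Basis ι ℤ Y) (y : M' Ψ) : EF Ψ b y 0 = 0 := by
  rw [EF]
  refine Finset.sum_eq_zero fun g _ => ?_
  rw [map_zero]
  exact E0_zero₂ b _

lemma EF_add₂ [Fintype ↥(Gr Ψ)] (b : Basis ι ℤ Y) (y z₁ z₂ : M' Ψ) :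
    EF Ψ b y (z₁ + z₂) = EF Ψ b y z₁ + EF Ψ b y z₂ := by
  rw [EF, EF, EF, ← Finset.sum_add_distrib]
  refine Finset.sum_congr rfl fun g _ => ?_
  rw [map_add]
  push_cast
  rw [E0_add₂]

lemma EF_smul₂ [Fintype ↥(Gr Ψ)] (b : Basis ι ℤ Y) (k : ℤ) (y z : M' Ψ) :
    EF Ψ b y (k • z) = k * EF Ψ b y z := by
  rw [EF, EF, Finset.mul_sum]
  refine Finset.sum_congr rfl fun g _ => ?_
  rw [map_smul]
  have : ((k • (g.1 z) : M' Ψ) : Y) = k • ((g.1 z : M' Ψ) : Y) := rfl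
  rw [this, E0_smul₂]

lemma EF_pos [Fintype ↥(Gr Ψ)] (b : Basis ι ℤ Y) {y : M' Ψ} (hy : y ≠ 0) :
    0 < EF Ψ b y y := by
  rw [EF]
  refine Finset.sum_pos' (fun g _ => E0_nonneg b _) ⟨⟨1, one_mem _⟩, Finset.mem_univ _, ?_⟩
  have h1 : ((1 : (M' Ψ) ≃ₗ[ℤ] (M' Ψ)) y : Y) = (y : Y) := rfl
  rw [h1]
  apply E0_pos
  intro h
  exact hy (Subtype.ext h)

end EForm

lemma nondeg [Module.Free ℤ X] [Module.Finite ℤ X] {v : Y} (hv : v ∈ M' Ψ)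
    (hperp : ∀ β ∈ Ψ.roots, Ψ.pair β v = 0) : v = 0 := by
  haveI := Y_free Ψ
  haveI := Y_finite Ψ
  haveI : Finite ↥(Gr Ψ) := (Gr_finite Ψ).to_subtype
  haveI : Fintype ↥(Gr Ψ) := Fintype.ofFinite _
  by_contra hvne
  set b := Module.Free.chooseBasis ℤ Y with hb
  set vM : M' Ψ := ⟨v, hv⟩ with hvM
  have hσmem : ∀ β ∈ Ψ.roots, σr Ψ β ∈ Gr Ψ := fun β hβ =>
    Subgroup.subset_closure ⟨β, hβ, rfl⟩
  have hfixv : ∀ β ∈ Ψ.roots, σr Ψ β vM = vM := by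
    intro β hβ
    apply Subtype.ext
    rw [σr_coe, sYe_apply Ψ hβ, sY, hperp β hβ, zero_smul, sub_zero]
  have hECC : ∀ c : M' Ψ, (c : Y) ∈ Cset Ψ → EF Ψ b vM c = 0 := by
    intro c hc
    obtain ⟨β, hβ, hcβ⟩ := Finset.mem_image.mp hc
    have hσc : σr Ψ β c = -c := by
      apply Subtype.ext
      rw [σr_coe, sYe_apply Ψ hβ]
      have hc2 : ((-c : M' Ψ) : Y) = -(c : Y) := rfl
      rw [hc2, ← hcβ, sY_self Ψ hβ]
    have h1 : EF Ψ b vM c = EF Ψ b (σr Ψ β vM) (σr Ψ β c) :=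
      (EF_inv Ψ b (hσmem β hβ) vM c).symm
    rw [hfixv β hβ, hσc, EF_neg₂] at h1
    omega
  have hall : ∀ z : M' Ψ, EF Ψ b vM z = 0 := by
    intro z
    have hz : z ∈ Submodule.span ℤ (CC Ψ) := by rw [span_CC]; trivial
    refine Submodule.span_induction (p := fun z _ => EF Ψ b vM z = 0) ?_ ?_ ?_ ?_ hz
    · intro c hcc
      exact hECC c hcc
    · exact EF_zero₂ Ψ b vM
    · intro a c _ _ ha hc
      rw [EF_add₂, ha, hc, add_zero]
    · intro k a _ ha
      rw [EF_smul₂, ha, mul_zero]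
  have hpos : 0 < EF Ψ b vM vM :=
    EF_pos Ψ b (fun h => hvne (by
      have := congrArg Subtype.val h
      simpa [hvM] using this))
  rw [hall vM] at hpos
  omega

end ZRD

namespace ZRD

open Module

variable (Ψ : ZRootDatum X Y)

lemma sYe_symm (β : X) : (sYe Ψ β).symm = sYe Ψ β := by
  by_cases h : β ∈ Ψ.roots
  · rw [sYe, dif_pos h]; exact Module.reflection_symm _
  · rw [sYe, dif_neg h]; rfl

lemma pair_s_sYe {β : X} (h : β ∈ Ψ.roots) (x : X) (y : Y) :
    Ψ.pair (s Ψ β x) (sYe Ψ β y) = Ψ.pair x y := by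
  rw [sYe_apply Ψ h, pair_s_sY Ψ h, sY_invol Ψ h]

lemma sYe_sub_self_mem (β : X) (y : Y) : sYe Ψ β y - y ∈ M' Ψ := by
  by_cases h : β ∈ Ψ.roots
  · rw [sYe_apply Ψ h, sY]
    have : y - Ψ.pair β y • Ψ.coroot β - y = -(Ψ.pair β y • Ψ.coroot β) := by abel
    rw [this]
    exact Submodule.neg_mem _ (Submodule.smul_mem _ _
      (Submodule.subset_span (coroot_mem_Cset Ψ h)))
  · rw [sYe, dif_neg h]
    simpa using Submodule.zero_mem (M' Ψ)

lemma weyl_adjoint {w : AddAut X} (hw : w ∈ Ψ.weylGroup) :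
    ∃ w' : Y ≃+ Y, (∀ x y, Ψ.pair (w x) (w' y) = Ψ.pair x y) ∧
      (∀ y : Y, w' y - y ∈ M' Ψ) ∧ (∀ y : Y, w'.symm y - y ∈ M' Ψ) := by
  induction hw using Subgroup.closure_induction with
  | mem g hgen =>
    obtain ⟨β, hβ, hgx⟩ := hgen
    refine ⟨(sYe Ψ β).toAddEquiv, fun x y => ?_, fun y => sYe_sub_self_mem Ψ β y, fun y => ?_⟩
    · have hg : g x = s Ψ β x := by rw [hgx, s_apply Ψ hβ]
      rw [hg]
      exact pair_s_sYe Ψ hβ x y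
    · show (sYe Ψ β).symm y - y ∈ M' Ψ
      rw [sYe_symm]
      exact sYe_sub_self_mem Ψ β y
  | one =>
    exact ⟨AddEquiv.refl Y, fun x y => rfl, fun y => by
      simpa using Submodule.zero_mem (M' Ψ), fun y => by
      simpa using Submodule.zero_mem (M' Ψ)⟩
  | mul u v _ _ ihu ihv =>
    obtain ⟨u', hu1, hu2, hu3⟩ := ihu
    obtain ⟨v', hv1, hv2, hv3⟩ := ihv
    refine ⟨v'.trans u', fun x y => ?_, fun y => ?_, fun y => ?_⟩
    · have h1 : (u * v) x = u (v x) := rfl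
      have h2 : (v'.trans u') y = u' (v' y) := rfl
      rw [h1, h2, hu1, hv1]
    · have h2 : (v'.trans u') y = u' (v' y) := rfl
      rw [h2]
      have : u' (v' y) - y = (u' (v' y) - v' y) + (v' y - y) := by abel
      rw [this]
      exact Submodule.add_mem _ (hu2 _) (hv2 _)
    · have h2 : (v'.trans u').symm y = v'.symm (u'.symm y) := rfl
      rw [h2]
      have : v'.symm (u'.symm y) - y = (v'.symm (u'.symm y) - u'.symm y) + (u'.symm y - y) := by
        abel
      rw [this]
      exact Submodule.add_mem _ (hv3 _) (hu3 _)
  | inv u _ ihu =>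
    obtain ⟨u', hu1, hu2, hu3⟩ := ihu
    refine ⟨u'.symm, fun x y => ?_, hu3, by simpa using hu2⟩
    have h1 : u (u⁻¹ x) = x := by
      rw [← AddAut.mul_apply_comp, mul_inv_cancel]; rfl
    have h2 : u' (u'.symm y) = y := u'.apply_symm_apply y
    calc Ψ.pair (u⁻¹ x) (u'.symm y) = Ψ.pair (u (u⁻¹ x)) (u' (u'.symm y)) := (hu1 _ _).symm
    _ = Ψ.pair x y := by rw [h1, h2]

lemma fix_roots_id [Module.Free ℤ X] [Module.Finite ℤ X] {w : AddAut X}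
    (hw : w ∈ Ψ.weylGroup) (hfix : ∀ β ∈ Ψ.roots, w β = β) : ∀ x, w x = x := by
  obtain ⟨w', hw1, hw2, _⟩ := weyl_adjoint Ψ hw
  have hid : ∀ y, w' y = y := by
    intro y
    have hperp : ∀ β ∈ Ψ.roots, Ψ.pair β (w' y - y) = 0 := by
      intro β hβ
      have h1 : Ψ.pair (w β) (w' y) = Ψ.pair β y := hw1 β y
      rw [hfix β hβ] at h1
      rw [map_sub, h1, sub_self]
    have := nondeg Ψ (hw2 y) hperp
    rwa [sub_eq_zero] at this
  intro x
  have hp : ∀ y, Ψ.pair (w x) y = Ψ.pair x y := by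
    intro y
    have := hw1 x y
    rwa [hid y] at this
  have : Ψ.pair (w x) = Ψ.pair x := AddMonoidHom.ext hp
  exact Ψ.perfect.injective this

lemma weyl_word {w : AddAut X} (hw : w ∈ Ψ.weylGroup) :
    ∃ L : List X, (∀ b ∈ L, b ∈ Ψ.roots) ∧ ∀ x, w x = wp Ψ L x := by
  induction hw using Subgroup.closure_induction with
  | mem g hgen =>
    obtain ⟨β, hβ, hgx⟩ := hgen
    exact ⟨[β], fun b hb => by rw [List.mem_singleton.mp hb]; exact hβ, fun x => by
      rw [wp_singleton, hgx, s_apply Ψ hβ]⟩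
  | one => exact ⟨[], by simp, fun x => rfl⟩
  | mul u v _ _ ihu ihv =>
    obtain ⟨Lu, hLu, hu⟩ := ihu
    obtain ⟨Lv, hLv, hv⟩ := ihv
    refine ⟨Lu ++ Lv, fun b hb => ?_, fun x => ?_⟩
    · rcases List.mem_append.mp hb with h | h
      · exact hLu b h
      · exact hLv b h
    · rw [AddAut.mul_apply_comp, hv, hu, wp_append]
  | inv u _ ihu =>
    obtain ⟨L, hL, hu⟩ := ihu
    refine ⟨L.reverse, fun b hb => hL b (List.mem_reverse.mp hb), fun x => ?_⟩
    have h1 : u (wp Ψ L.reverse x) = x := by rw [hu, wp_apply_reverse]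
    have : u⁻¹ (u (wp Ψ L.reverse x)) = u⁻¹ x := by rw [h1]
    rw [← AddAut.mul_apply_comp, inv_mul_cancel, show (1 : AddAut X) (wp Ψ L.reverse x)
      = wp Ψ L.reverse x from rfl] at this
    exact this.symm

variable {Ψ}

/-- Main lemma: a nontrivial `w` in the Weyl group sends some positive root to a
negative root. -/
theorem moves_pos_to_neg [Module.Free ℤ X] [Module.Finite ℤ X] {Δ : Finset X}
    (hΔ : Ψ.IsBase Δ) {w : AddAut X} (hw : w ∈ Ψ.weylGroup) (hne : w ≠ 1) :
    ∃ β : X, Pos Ψ Δ β ∧ Pos Ψ Δ (-(w β)) := by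
  by_contra hcon
  push_neg at hcon
  obtain ⟨L, hLroots, hL⟩ := weyl_word Ψ hw
  have hwroot : ∀ β ∈ Ψ.roots, w β ∈ Ψ.roots := by
    intro β hβ
    rw [hL]
    exact wp_root Ψ hLroots hβ
  have hwpos : ∀ β, Pos Ψ Δ β → Pos Ψ Δ (w β) := by
    intro β hβ
    rcases pos_or_pos_neg hΔ (hwroot β hβ.1) with h | h
    · exact h
    · exact absurd h (hcon β hβ)
  obtain ⟨L', hL'Δ, hL'⟩ := word_to_simple hΔ L hLroots
  have hL'pos : ∀ β, Pos Ψ Δ β → Pos Ψ Δ (wp Ψ L' β) := by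
    intro β hβ
    rw [← hL' β (root_mem_Q Ψ hβ.1), ← hL]
    exact hwpos β hβ
  have hfixQ : ∀ x ∈ Q Ψ, wp Ψ L' x = x :=
    chamber hΔ L'.length L' le_rfl hL'Δ hL'pos
  have hfix : ∀ β ∈ Ψ.roots, w β = β := by
    intro β hβ
    rw [hL, hL' β (root_mem_Q Ψ hβ), hfixQ β (root_mem_Q Ψ hβ)]
  exact hne (AddEquiv.ext (fix_roots_id Ψ hw hfix))

end ZRD

namespace ZRD

lemma transport {ρ : Γ →* AddAut X} {Δ : Finset X}
    (hstab : ∀ γ : Γ, ∀ a ∈ Δ, ρ γ a ∈ Δ) (γ : Γ) {x : X} {c : X → ℤ}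
    (hx : x = ∑ a ∈ Δ, c a • a) :
    ∃ d : X → ℤ, ρ γ x = ∑ a ∈ Δ, d a • a ∧ ∀ b ∈ Δ, ∃ a ∈ Δ, d b = c a := by
  have hinj : Function.Injective (⇑(ρ γ)) := (ρ γ).injective
  have himg : Δ.image (⇑(ρ γ)) = Δ := by
    apply Finset.eq_of_subset_of_card_le
    · intro b hb
      obtain ⟨a, ha, rfl⟩ := Finset.mem_image.mp hb
      exact hstab γ a ha
    · rw [Finset.card_image_of_injective Δ hinj]
  set d : X → ℤ := fun b => c (Function.invFun (⇑(ρ γ)) b) with hd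
  have hinv : ∀ a : X, Function.invFun (⇑(ρ γ)) (ρ γ a) = a :=
    Function.leftInverse_invFun hinj
  refine ⟨d, ?_, ?_⟩
  · rw [hx, map_sum]
    have h1 : ∀ a ∈ Δ, ρ γ (c a • a) = d (ρ γ a) • (ρ γ a) := by
      intro a _
      rw [map_zsmul]
      congr 1
      rw [hd]
      simp only
      rw [hinv a]
    rw [Finset.sum_congr rfl h1]
    have hsi := Finset.sum_image (s := Δ) (g := ⇑(ρ γ)) (f := fun b : X => d b • b)
      (fun a _ b _ hab => hinj hab)
    rw [← hsi, himg]
  · intro b hb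
    have : b ∈ Δ.image (⇑(ρ γ)) := by rw [himg]; exact hb
    obtain ⟨a, ha, rfl⟩ := Finset.mem_image.mp this
    refine ⟨a, ha, ?_⟩
    rw [hd]
    simp only
    rw [hinv a]

end ZRD


/-- Let `w ∈ W^Γ` be nontrivial.  Then there is a positive
root `β` (with respect to `Δ`) such that `w(γ·β)` is negative for every
`γ ∈ Γ`; consequently the orbit sum `∑_γ γ·(wβ)` (an integral multiple of
`ι(w(i*β))`) is a nonpositive combination of simple roots, and
`w(i*β) = i*(wβ) ≠ i*β` in the restricted lattice. -/
theorem weylFixed_nontrivial_moves_restricted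
    [Fintype Γ] [Module.Free ℤ X] [Module.Finite ℤ X]
    (Ψ : ZRootDatum X Y) (ρ : Γ →* AddAut X) (ρ' : Γ →* AddAut Y)
    (hact : RDAction Ψ ρ ρ') (Δ : Finset X) (hΔ : Ψ.IsBase Δ)
    (hstab : ∀ γ : Γ, ∀ a ∈ Δ, ρ γ a ∈ Δ)
    (w : AddAut X) (hw : w ∈ Ψ.weylGroup)
    (hfix : ∀ γ : Γ, ρ γ * w * (ρ γ)⁻¹ = w) (hne : w ≠ 1) :
    ∃ β ∈ Ψ.roots,
      (∃ c : X → ℤ, β = ∑ a ∈ Δ, c a • a ∧ ∀ a ∈ Δ, 0 ≤ c a) ∧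
      (∀ γ : Γ, ∃ c : X → ℤ, w (ρ γ β) = ∑ a ∈ Δ, c a • a ∧ ∀ a ∈ Δ, c a ≤ 0) ∧
      (∃ c : X → ℤ, (∑ γ : Γ, ρ γ (w β)) = ∑ a ∈ Δ, c a • a ∧ ∀ a ∈ Δ, c a ≤ 0) ∧
      istar ρ (w β) ≠ istar ρ β := by
  obtain ⟨β, hβpos, hwneg⟩ := ZRD.moves_pos_to_neg hΔ hw hne
  obtain ⟨hβroot, c, hc, hcpos⟩ := hβpos
  have hnwβroot : -(w β) ∈ Ψ.roots := hwneg.1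
  obtain ⟨m, hm, hmpos⟩ := hwneg.2
  have hwβrep : w β = ∑ a ∈ Δ, (-(m a)) • a := by
    rw [← neg_neg (w β), hm]
    simp [neg_smul]
  -- Γ-equivariance of w
  have hequi : ∀ γ : Γ, ∀ x : X, w (ρ γ x) = ρ γ (w x) := by
    intro γ x
    have hinv : (ρ γ)⁻¹ (ρ γ x) = x := by
      rw [← AddAut.mul_apply_comp, inv_mul_cancel, AddAut.one_apply_comp]
    have h0 : (ρ γ * w * (ρ γ)⁻¹) (ρ γ x) = w (ρ γ x) := by rw [hfix γ]
    rw [← h0, AddAut.mul_apply_comp, AddAut.mul_apply_comp, hinv]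
  -- negative representations for each w(γ·β)
  have hbu2 : ∀ γ : Γ, ∃ cγ : X → ℤ,
      w (ρ γ β) = ∑ a ∈ Δ, cγ a • a ∧ ∀ a ∈ Δ, cγ a ≤ 0 := by
    intro γ
    obtain ⟨d, hd, hdval⟩ := ZRD.transport hstab γ hwβrep
    refine ⟨d, by rw [hequi γ β, hd], fun b hb => ?_⟩
    obtain ⟨a, ha, hda⟩ := hdval b hb
    rw [hda]
    have := hmpos a ha
    omega
  choose D hD1 hD2 using hbu2
  have hsum3 : (∑ γ : Γ, ρ γ (w β)) = ∑ a ∈ Δ, (∑ γ : Γ, D γ a) • a := by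
    have h1 : ∀ γ : Γ, ρ γ (w β) = ∑ a ∈ Δ, D γ a • a := fun γ => by
      rw [← hequi γ β, hD1]
    rw [Finset.sum_congr rfl fun γ _ => h1 γ, Finset.sum_comm]
    exact Finset.sum_congr rfl fun a _ => Finset.sum_smul.symm
  -- positive representations for each γ·β
  choose E hE1 hE2' using fun γ : Γ => ZRD.transport hstab γ hc
  have hE2 : ∀ γ : Γ, ∀ b ∈ Δ, 0 ≤ E γ b := by
    intro γ b hb
    obtain ⟨a, ha, hea⟩ := hE2' γ b hb
    rw [hea]
    exact hcpos a ha
  refine ⟨β, hβroot, ⟨c, hc, hcpos⟩, fun γ => ⟨D γ, hD1 γ, hD2 γ⟩,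
    ⟨fun a => ∑ γ : Γ, D γ a, hsum3, fun a ha => Finset.sum_nonpos fun γ _ => hD2 γ a ha⟩, ?_⟩
  -- the restricted images differ
  intro heq
  obtain ⟨z, hzker, hz⟩ := (QuotientAddGroup.mk'_eq_mk' _).mp heq
  have hzval : z = β - w β := eq_sub_of_add_eq' hz
  have hker : normMap ρ z = 0 := AddMonoidHom.mem_ker.mp hzker
  have hNeq : normMap ρ β = normMap ρ (w β) := by
    rw [hzval, map_sub, sub_eq_zero] at hker
    exact hker
  have happ : ∀ x : X, normMap ρ x = ∑ γ : Γ, ρ γ x := by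
    intro x
    rw [normMap, AddMonoidHom.finset_sum_apply]
    rfl
  have hNβ : normMap ρ β = ∑ a ∈ Δ, (∑ γ : Γ, E γ a) • a := by
    rw [happ, Finset.sum_congr rfl fun γ _ => hE1 γ, Finset.sum_comm]
    exact Finset.sum_congr rfl fun a _ => Finset.sum_smul.symm
  have hNwβ : normMap ρ (w β) = ∑ a ∈ Δ, (∑ γ : Γ, D γ a) • a := by
    rw [happ]
    exact hsum3
  have hcoeff : ∀ a ∈ Δ, (∑ γ : Γ, E γ a) = ∑ γ : Γ, D γ a :=
    ZRD.coeff_unique hΔ (by rw [← hNβ, ← hNwβ, hNeq])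
  have hzero : ∀ a ∈ Δ, ∀ γ : Γ, E γ a = 0 := by
    intro a ha
    have h1 : (0:ℤ) ≤ ∑ γ : Γ, E γ a := Finset.sum_nonneg fun γ _ => hE2 γ a ha
    have h2 : (∑ γ : Γ, D γ a) ≤ 0 := Finset.sum_nonpos fun γ _ => hD2 γ a ha
    have h3 : (∑ γ : Γ, E γ a) = 0 := by
      have := hcoeff a ha
      omega
    intro γ
    exact (Finset.sum_eq_zero_iff_of_nonneg fun γ' _ => hE2 γ' a ha).mp h3 γ
      (Finset.mem_univ γ)
  have hβ0 : ρ 1 β = 0 := by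
    rw [hE1 1]
    exact Finset.sum_eq_zero fun a ha => by rw [hzero a ha 1, zero_smul]
  rw [map_one, AddAut.one_apply_comp] at hβ0
  exact ZRD.root_ne_zero Ψ hβroot hβ0
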